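/- Let N ≥ 3 be a prime and let M_k(N) be the N^k × N^k matrices over ZMod N defined recursively as above. Then for every k ≥ 1 and any two distinct columns c_i, c_j of M_k(N), the Hamming distance satisfies d_H(c_i, c_j) = (N − 1)N^{k−1}; in particular, the minimum Hamming distance between distinct rows and the minimum Hamming distance between distinct columns of M_k(N) both equal ((N − 1)/N)·N^k. -/

import Mathlib

/-- The `N × N` matrix `M_1(N)` over `ZMod N` with entries
`m_{ij} = i + Σ_{l=1}^{j-i} (N - l + 1) (mod N)` for `i ≤ j`, and `m_{ij} = m_{ji}` for `i > j`. -/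
def M1 (N : ℕ) (i j : ℕ) : ZMod N :=
  if i ≤ j then ((i + ∑ l ∈ Finset.Icc 1 (j - i), (N - l + 1) : ℕ) : ZMod N)
  else ((j + ∑ l ∈ Finset.Icc 1 (i - j), (N - l + 1) : ℕ) : ZMod N)

/-- The recursively defined `N^k × N^k` matrices `M_k(N)`: the entry of `M_{k+1}(N)` at
position `(i·N^k + p, j·N^k + q)` is `M_k(N)_{pq} + M_1(N)_{ij}`; the base case `k = 0` is the
`1 × 1` zero matrix, so that `M_1(N)` is recovered at `k = 1`. -/
def Mk (N : ℕ) : ℕ → ℕ → ℕ → ZMod N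
  | 0, _, _ => 0
  | k + 1, a, b => Mk N k (a % N ^ k) (b % N ^ k) + M1 N (a / N ^ k) (b / N ^ k)

lemma M1_symm (N i j : ℕ) : M1 N i j = M1 N j i := by
  unfold M1
  rcases Nat.lt_trichotomy i j with h | rfl | h
  · rw [if_pos h.le, if_neg (by omega)]
  · simp
  · rw [if_pos h.le, if_neg (by omega)]

lemma Mk_symm (N k : ℕ) : ∀ a b, Mk N k a b = Mk N k b a := by
  induction k with
  | zero => intro a b; rfl
  | succ k ih => intro a b; simp only [Mk]; rw [ih, M1_symm]

lemma two_mul_M1 (N : ℕ) {a b : ℕ} (ha : a < N) (hb : b < N) :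
    (2 : ZMod N) * M1 N a b = ((a : ZMod N) + b) - ((a : ZMod N) - b)^2 := by
  wlog hab : a ≤ b generalizing a b
  · rw [M1_symm]
    have := this hb ha (by omega)
    rw [this]; ring
  · unfold M1
    rw [if_pos hab]
    set d := b - a with hd
    have hdN : d ≤ N := by omega
    have hsum : ((∑ l ∈ Finset.Icc 1 d, (N - l + 1) : ℕ) : ZMod N)
        = ∑ l ∈ Finset.Icc 1 d, ((1 : ZMod N) - (l : ℕ)) := by
      push_cast
      apply Finset.sum_congr rfl
      intro l hl
      simp only [Finset.mem_Icc] at hl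
      have h1 : ((N - l : ℕ) : ZMod N) = (N : ZMod N) - l := Nat.cast_sub (by omega)
      rw [h1, ZMod.natCast_self]
      ring
    have hgauss : (∑ l ∈ Finset.Icc 1 d, (l : ℕ)) * 2 = (d + 1) * d := by
      have h1 : Finset.Icc 1 d = Finset.Ico 1 (d + 1) := by
        rw [Finset.Ico_add_one_right_eq_Icc]
      have h2 : (∑ l ∈ Finset.Ico 0 (d+1), l) = (∑ l ∈ Finset.Ico 0 1, l) + ∑ l ∈ Finset.Ico 1 (d+1), l := by
        rw [Finset.sum_Ico_consecutive] <;> omega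
      have h3 := Finset.sum_range_id_mul_two (d + 1)
      rw [Finset.range_eq_Ico, h2] at h3
      simp at h3
      rw [h1]
      omega
    -- now compute
    have hcast : ((d : ℕ) : ZMod N) = (b : ZMod N) - a := by
      rw [hd, Nat.cast_sub hab]
    have key : (2 : ZMod N) * (∑ l ∈ Finset.Icc 1 d, ((1 : ZMod N) - (l : ℕ)))
        = 2 * d - (d + 1) * d := by
      rw [Finset.sum_sub_distrib, Finset.sum_const]
      have : ((∑ l ∈ Finset.Icc 1 d, (l : ℕ) : ℕ) : ZMod N) = ∑ l ∈ Finset.Icc 1 d, ((l : ℕ) : ZMod N) := by push_cast; rfl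
      have h2 : (2 : ZMod N) * ∑ l ∈ Finset.Icc 1 d, ((l : ℕ) : ZMod N) = ((d : ZMod N) + 1) * d := by
        have hg2 := congrArg (Nat.cast : ℕ → ZMod N) hgauss
        push_cast at hg2
        linear_combination hg2
      rw [Nat.card_Icc]
      simp only [nsmul_eq_mul]
      rw [mul_sub, h2]
      have : ((d + 1 - 1 : ℕ) : ZMod N) = d := by norm_num
      rw [this]
      ring
    rw [Nat.cast_add, mul_add, hsum, key, hcast]
    ring

lemma M1_count (N : ℕ) (hN : 3 ≤ N) (hNp : N.Prime) {i j : ℕ} (hi : i < N) (hj : j < N)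
    (hij : i ≠ j) (c : ZMod N) :
    ((Finset.range N).filter (fun u => M1 N u i - M1 N u j = c)).card = 1 := by
  haveI : Fact N.Prime := ⟨hNp⟩
  haveI : NeZero N := ⟨by omega⟩
  set I := (i : ZMod N)
  set J := (j : ZMod N)
  have hIJ : I - J ≠ 0 := by
    rw [sub_ne_zero]
    intro h
    apply hij
    have := congrArg ZMod.val h
    rwa [ZMod.val_cast_of_lt hi, ZMod.val_cast_of_lt hj] at this
  have h2 : (2 : ZMod N) ≠ 0 := by
    have : ((2 : ℕ) : ZMod N) ≠ 0 := by
      rw [Ne, ZMod.natCast_eq_zero_iff]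
      intro h
      have := Nat.le_of_dvd (by omega) h
      omega
    simpa using this
  have h2IJ : (2 : ZMod N) * (I - J) ≠ 0 := mul_ne_zero h2 hIJ
  set z : ZMod N := (2 * c - (I - J) * (1 - I - J)) * ((2 : ZMod N) * (I - J))⁻¹ with hz
  have hzval : (2 : ZMod N) * (I - J) * z = 2 * c - (I - J) * (1 - I - J) := by
    rw [hz, ← mul_assoc, mul_comm ((2 : ZMod N) * (I - J)), mul_assoc,
      mul_inv_cancel₀ h2IJ, mul_one]
  have key : ∀ u : ℕ, u < N → (M1 N u i - M1 N u j = c ↔ (u : ZMod N) = z) := by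
    intro u hu
    set U := (u : ZMod N)
    have e1 : M1 N u i - M1 N u j = c ↔ (2 : ZMod N) * (M1 N u i - M1 N u j) = 2 * c := by
      constructor
      · intro h; rw [h]
      · intro h; exact mul_left_cancel₀ h2 h
    rw [e1, mul_sub, two_mul_M1 N hu hi, two_mul_M1 N hu hj]
    constructor
    · intro h
      have h' : (2 : ZMod N) * (I - J) * U = 2 * (I - J) * z := by
        rw [hzval]; linear_combination h
      exact mul_left_cancel₀ h2IJ h'
    · intro h
      linear_combination hzval + 2 * (I - J) * h
  have hfilter : (Finset.range N).filter (fun u => M1 N u i - M1 N u j = c) = {z.val} := by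
    ext u
    simp only [Finset.mem_filter, Finset.mem_range, Finset.mem_singleton]
    constructor
    · rintro ⟨hu, h⟩
      have h' := (key u hu).mp h
      rw [← h', ZMod.val_cast_of_lt hu]
    · rintro rfl
      have hv : z.val < N := ZMod.val_lt z
      exact ⟨hv, (key _ hv).mpr (by rw [ZMod.natCast_val, ZMod.cast_id])⟩
  rw [hfilter, Finset.card_singleton]

lemma filter_card_mul (P : ℕ → Prop) [DecidablePred P] (a b : ℕ) :
    ((Finset.range (a * b)).filter P).card
      = ∑ u ∈ Finset.range a, ((Finset.range b).filter (fun s => P (u * b + s))).card := by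
  rcases Nat.eq_zero_or_pos b with rfl | hb
  · simp
  rw [Finset.card_filter]
  simp only [Finset.card_filter]
  rw [← Finset.sum_product']
  apply Finset.sum_nbij' (fun t => ((t / b, t % b) : ℕ × ℕ)) (fun p => p.1 * b + p.2)
  · intro t ht
    simp only [Finset.mem_range, Finset.mem_product] at *
    exact ⟨(Nat.div_lt_iff_lt_mul hb).mpr ht, Nat.mod_lt _ hb⟩
  · intro p hp
    simp only [Finset.mem_range, Finset.mem_product] at *
    calc p.1 * b + p.2 < p.1 * b + b := by omega
      _ = (p.1 + 1) * b := by ring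
      _ ≤ a * b := Nat.mul_le_mul_right b hp.1
  · intro t ht
    simp only []
    rw [mul_comm]
    exact Nat.div_add_mod t b
  · intro p hp
    simp only [Finset.mem_range, Finset.mem_product] at hp
    have h1 : (p.1 * b + p.2) / b = p.1 := by
      rw [add_comm, Nat.add_mul_div_right _ _ hb, Nat.div_eq_of_lt hp.2, zero_add]
    have h2 : (p.1 * b + p.2) % b = p.2 := by
      rw [add_comm, Nat.add_mul_mod_self_right, Nat.mod_eq_of_lt hp.2]
    simp [h1, h2]
  · intro t ht
    have : t / b * b + t % b = t := by rw [mul_comm]; exact Nat.div_add_mod t b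
    simp only [this]

lemma Mk_count (N : ℕ) (hN : 3 ≤ N) (hNp : N.Prime) :
    ∀ k, ∀ i j : ℕ, i < N ^ k → j < N ^ k → i ≠ j → ∀ c : ZMod N,
    ((Finset.range (N ^ k)).filter (fun t => Mk N k t i - Mk N k t j = c)).card
      = N ^ (k - 1) := by
  intro k
  induction k with
  | zero => intro i j hi hj hij c; rw [pow_zero] at hi hj; omega
  | succ k ih =>
    intro i j hi hj hij c
    have hNk : (0:ℕ) < N ^ k := Nat.pow_pos (by omega)
    have hpow : N ^ (k + 1) = N * N ^ k := by ring
    rw [hpow] at hi hj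
    rw [hpow, filter_card_mul]
    have hmoddiv : ∀ u s : ℕ, s < N ^ k → (u * N ^ k + s) % N ^ k = s ∧ (u * N ^ k + s) / N ^ k = u := by
      intro u s hs
      constructor
      · rw [add_comm, Nat.add_mul_mod_self_right, Nat.mod_eq_of_lt hs]
      · rw [add_comm, Nat.add_mul_div_right _ _ hNk, Nat.div_eq_of_lt hs, zero_add]
    have hterm : ∀ u s : ℕ, s < N ^ k →
        (Mk N (k+1) (u * N ^ k + s) i - Mk N (k+1) (u * N ^ k + s) j = c
          ↔ Mk N k s (i % N ^ k) - Mk N k s (j % N ^ k)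
              = c - (M1 N u (i / N ^ k) - M1 N u (j / N ^ k))) := by
      intro u s hs
      obtain ⟨hm, hd⟩ := hmoddiv u s hs
      simp only [Mk, hm, hd]
      constructor <;> intro h <;> linear_combination h
    by_cases h0 : i % N ^ k = j % N ^ k
    · -- low digits equal, high digits differ
      have h1 : i / N ^ k ≠ j / N ^ k := by
        intro h
        apply hij
        have e1 := Nat.div_add_mod i (N ^ k)
        have e2 := Nat.div_add_mod j (N ^ k)
        rw [h, h0] at e1
        omega
      have hiN : i / N ^ k < N := Nat.div_lt_iff_lt_mul hNk |>.mpr (by omega)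
      have hjN : j / N ^ k < N := Nat.div_lt_iff_lt_mul hNk |>.mpr (by omega)
      have hinner : ∀ u : ℕ, ((Finset.range (N ^ k)).filter
          (fun s => Mk N (k+1) (u * N ^ k + s) i - Mk N (k+1) (u * N ^ k + s) j = c)).card
          = if M1 N u (i / N ^ k) - M1 N u (j / N ^ k) = c then N ^ k else 0 := by
        intro u
        have : ∀ s ∈ Finset.range (N ^ k),
            (Mk N (k+1) (u * N ^ k + s) i - Mk N (k+1) (u * N ^ k + s) j = c
              ↔ M1 N u (i / N ^ k) - M1 N u (j / N ^ k) = c) := by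
          intro s hs
          rw [Finset.mem_range] at hs
          rw [hterm u s hs, h0]
          constructor <;> intro h <;> linear_combination h
        rw [Finset.filter_congr this]
        by_cases hQ : M1 N u (i / N ^ k) - M1 N u (j / N ^ k) = c
        · simp [hQ, Finset.filter_true_of_mem]
        · simp [hQ]
      calc (∑ u ∈ Finset.range N, ((Finset.range (N ^ k)).filter
            (fun s => Mk N (k+1) (u * N ^ k + s) i - Mk N (k+1) (u * N ^ k + s) j = c)).card)
          = ∑ u ∈ Finset.range N, if M1 N u (i / N ^ k) - M1 N u (j / N ^ k) = c then N ^ k else 0 := by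
            exact Finset.sum_congr rfl fun u _ => hinner u
        _ = ((Finset.range N).filter (fun u => M1 N u (i / N ^ k) - M1 N u (j / N ^ k) = c)).card * N ^ k := by
            rw [← Finset.sum_filter, Finset.sum_const, smul_eq_mul]
        _ = N ^ k := by rw [M1_count N hN hNp hiN hjN h1 c, one_mul]
        _ = N ^ (k + 1 - 1) := by norm_num
    · -- low digits differ
      have hk1 : 1 ≤ k := by
        rcases Nat.eq_zero_or_pos k with rfl | h
        · rw [pow_zero] at h0; omega
        · exact h
      have him : i % N ^ k < N ^ k := Nat.mod_lt _ hNk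
      have hjm : j % N ^ k < N ^ k := Nat.mod_lt _ hNk
      have hinner : ∀ u : ℕ, ((Finset.range (N ^ k)).filter
          (fun s => Mk N (k+1) (u * N ^ k + s) i - Mk N (k+1) (u * N ^ k + s) j = c)).card
          = N ^ (k - 1) := by
        intro u
        have : ((Finset.range (N ^ k)).filter
            (fun s => Mk N (k+1) (u * N ^ k + s) i - Mk N (k+1) (u * N ^ k + s) j = c))
            = ((Finset.range (N ^ k)).filter
            (fun s => Mk N k s (i % N ^ k) - Mk N k s (j % N ^ k)
              = c - (M1 N u (i / N ^ k) - M1 N u (j / N ^ k)))) := by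
          apply Finset.filter_congr
          intro s hs
          rw [Finset.mem_range] at hs
          simpa using hterm u s hs
        rw [this, ih _ _ him hjm h0 _]
      calc (∑ u ∈ Finset.range N, ((Finset.range (N ^ k)).filter
            (fun s => Mk N (k+1) (u * N ^ k + s) i - Mk N (k+1) (u * N ^ k + s) j = c)).card)
          = ∑ u ∈ Finset.range N, N ^ (k - 1) := Finset.sum_congr rfl fun u _ => hinner u
        _ = N * N ^ (k - 1) := by rw [Finset.sum_const, Finset.card_range, smul_eq_mul]
        _ = N ^ (k + 1 - 1) := by
            rw [Nat.add_sub_cancel, ← pow_succ']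
            congr 1
            omega

lemma main_dist (N : ℕ) (hN : 3 ≤ N) (hNp : N.Prime) (k : ℕ) (hk : 1 ≤ k)
    (i j : Fin (N ^ k)) (hij : i ≠ j) :
    hammingDist (fun t : Fin (N ^ k) => Mk N k t i) (fun t : Fin (N ^ k) => Mk N k t j)
      = (N - 1) * N ^ (k - 1) := by
  have hij' : (i : ℕ) ≠ (j : ℕ) := fun h => hij (Fin.ext h)
  rw [hammingDist]
  have hcount := Mk_count N hN hNp k i j i.isLt j.isLt hij' 0
  -- convert Fin filter to range filter
  have h1 : (Finset.filter (fun t : Fin (N ^ k) => Mk N k t i ≠ Mk N k t j) Finset.univ).card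
      = ((Finset.range (N ^ k)).filter (fun t => Mk N k t i ≠ Mk N k t j)).card := by
    rw [Finset.card_filter, Finset.card_filter, Fin.sum_univ_eq_sum_range
      (fun t => if Mk N k t i ≠ Mk N k t j then 1 else 0)]
  have h2 : ((Finset.range (N ^ k)).filter (fun t => Mk N k t i = Mk N k t j)).card
      = N ^ (k - 1) := by
    rw [← hcount]
    congr 1
    apply Finset.filter_congr
    intro t _
    rw [sub_eq_zero]
  have h3 := Finset.card_filter_add_card_filter_not
    (s := Finset.range (N ^ k)) (p := fun t => Mk N k t i = Mk N k t j)
  simp only [Finset.card_range] at h3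
  have hpow : N ^ k = N * N ^ (k - 1) := by
    rw [← pow_succ']
    congr 1
    omega
  rw [h2] at h3
  have hexp : (N - 1) * N ^ (k - 1) + N ^ (k - 1) = N ^ k := by
    rw [hpow]
    calc (N - 1) * N ^ (k - 1) + N ^ (k - 1) = ((N - 1) + 1) * N ^ (k - 1) := by ring
      _ = N * N ^ (k - 1) := by rw [show N - 1 + 1 = N by omega]
  rw [h1]
  have : (Finset.filter (fun t => Mk N k t (i : ℕ) ≠ Mk N k t (j : ℕ)) (Finset.range (N ^ k)))
      = (Finset.filter (fun a => ¬ Mk N k a (i : ℕ) = Mk N k a (j : ℕ)) (Finset.range (N ^ k))) := rfl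
  rw [this]
  omega

theorem Mk_columns_hammingDist_and_min_distances (N : ℕ) (hN : 3 ≤ N) (hNp : N.Prime)
    (k : ℕ) (hk : 1 ≤ k) :
    (∀ i j : Fin (N ^ k), i ≠ j →
      hammingDist (fun t : Fin (N ^ k) => Mk N k t i) (fun t : Fin (N ^ k) => Mk N k t j)
        = (N - 1) * N ^ (k - 1)) ∧
    sInf {d : ℕ | ∃ i j : Fin (N ^ k), i ≠ j ∧
        d = hammingDist (fun t : Fin (N ^ k) => Mk N k i t) (fun t : Fin (N ^ k) => Mk N k j t)}
      = (N - 1) * N ^ (k - 1) ∧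
    sInf {d : ℕ | ∃ i j : Fin (N ^ k), i ≠ j ∧
        d = hammingDist (fun t : Fin (N ^ k) => Mk N k t i) (fun t : Fin (N ^ k) => Mk N k t j)}
      = (N - 1) * N ^ (k - 1) := by
  have hmain : ∀ i j : Fin (N ^ k), i ≠ j →
      hammingDist (fun t : Fin (N ^ k) => Mk N k t i) (fun t : Fin (N ^ k) => Mk N k t j)
        = (N - 1) * N ^ (k - 1) := fun i j h => main_dist N hN hNp k hk i j h
  have h2 : (1 : ℕ) < N ^ k := Nat.one_lt_pow (by omega) (by omega)
  have hne : (⟨0, by omega⟩ : Fin (N ^ k)) ≠ ⟨1, h2⟩ := by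
    intro h
    have := congrArg Fin.val h
    simp at this
  have hrow : ∀ i j : Fin (N ^ k),
      hammingDist (fun t : Fin (N ^ k) => Mk N k i t) (fun t : Fin (N ^ k) => Mk N k j t)
        = hammingDist (fun t : Fin (N ^ k) => Mk N k t i) (fun t : Fin (N ^ k) => Mk N k t j) := by
    intro i j
    congr 1 <;> funext t <;> exact Mk_symm N k _ _
  refine ⟨hmain, ?_, ?_⟩
  · have hset : {d : ℕ | ∃ i j : Fin (N ^ k), i ≠ j ∧
        d = hammingDist (fun t : Fin (N ^ k) => Mk N k i t) (fun t : Fin (N ^ k) => Mk N k j t)}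
        = {(N - 1) * N ^ (k - 1)} := by
      ext d
      simp only [Set.mem_setOf_eq, Set.mem_singleton_iff]
      constructor
      · rintro ⟨i, j, hij, rfl⟩
        rw [hrow]
        exact hmain i j hij
      · rintro rfl
        exact ⟨_, _, hne, by rw [hrow, hmain _ _ hne]⟩
    rw [hset, csInf_singleton]
  · have hset : {d : ℕ | ∃ i j : Fin (N ^ k), i ≠ j ∧
        d = hammingDist (fun t : Fin (N ^ k) => Mk N k t i) (fun t : Fin (N ^ k) => Mk N k t j)}
        = {(N - 1) * N ^ (k - 1)} := by
      ext d
      simp only [Set.mem_setOf_eq, Set.mem_singleton_iff]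
      constructor
      · rintro ⟨i, j, hij, rfl⟩
        exact hmain i j hij
      · rintro rfl
        exact ⟨_, _, hne, (hmain _ _ hne).symm⟩
    rw [hset, csInf_singleton]
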